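/- Let M and M' be matchings in a graph G, and suppose every edge of M' \ M that is not incident to two edges of M (i.e., every 'good' edge) has already been processed, meaning there are no good edges in M' \ M*. Then |M* \ M'| ≥ |M' \ M*|. -/

import Mathlib

/-- `M` is a matching of the simple graph `G`: a set of edges of `G` that are
pairwise vertex-disjoint. -/
def IsMatching {V : Type*} (G : SimpleGraph V) (M : Finset (Sym2 V)) : Prop :=
  (∀ e ∈ M, e ∈ G.edgeSet) ∧
  ∀ e ∈ M, ∀ f ∈ M, e ≠ f → ∀ v : V, v ∈ e → v ∉ f

/-- If every edge of `M' \ M*` is "bad", i.e. incident to two distinct edges of `M*`,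
then the number of edges of `M*` not in `M'` is at least the number of edges of
`M'` not in `M*`. -/
theorem stmt2 {V : Type*} [Fintype V] [DecidableEq V] (G : SimpleGraph V)
    (Mstar M' : Finset (Sym2 V))
    (hMstar : IsMatching G Mstar) (hM' : IsMatching G M')
    (bad : ∀ e ∈ M' \ Mstar, ∃ f ∈ Mstar, ∃ g ∈ Mstar, f ≠ g ∧
      (∃ v : V, v ∈ e ∧ v ∈ f) ∧ (∃ v : V, v ∈ e ∧ v ∈ g)) :
    (M' \ Mstar).card ≤ (Mstar \ M').card := by
  classical
  set A := M' \ Mstar with hA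
  set B := Mstar \ M' with hB
  -- any edge of Mstar sharing a vertex with an edge of A lies in B
  have key : ∀ e ∈ A, ∀ f ∈ Mstar, (∃ v, v ∈ e ∧ v ∈ f) → f ∈ B := by
    rintro e he f hf ⟨v, hve, hvf⟩
    have heM' : e ∈ M' := (Finset.mem_sdiff.mp he).1
    have heS : e ∉ Mstar := (Finset.mem_sdiff.mp he).2
    refine Finset.mem_sdiff.mpr ⟨hf, fun hfM' => ?_⟩
    have hne : e ≠ f := fun h => heS (h ▸ hf)
    exact hM'.2 e heM' f hfM' hne v hve hvf
  have h1 : ∀ e ∈ A, 2 ≤ (B.filter (fun f => ∃ v, v ∈ e ∧ v ∈ f)).card := by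
    intro e he
    obtain ⟨f, hf, g, hg, hfg, hef, heg⟩ := bad e he
    refine Finset.one_lt_card.mpr ?_
    refine ⟨f, Finset.mem_filter.mpr ⟨key e he f hf hef, hef⟩,
      g, Finset.mem_filter.mpr ⟨key e he g hg heg, heg⟩, hfg⟩
  have h2 : ∀ f : Sym2 V, (A.filter (fun e => ∃ v, v ∈ e ∧ v ∈ f)).card ≤ 2 := by
    intro f
    induction f using Sym2.ind with
    | _ a b =>
      have hsub : (A.filter (fun e => ∃ v, v ∈ e ∧ v ∈ s(a, b))).card ≤
          ({a, b} : Finset V).card := by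
        apply Finset.card_le_card_of_injOn
          (fun e => if h : ∃ v, v ∈ e ∧ v ∈ s(a, b) then h.choose else a)
        · intro e he
          have h := (Finset.mem_filter.mp he).2
          simp only [dif_pos h, Finset.mem_coe, Finset.mem_insert, Finset.mem_singleton]
          exact Sym2.mem_iff.mp h.choose_spec.2
        · intro e1 he1 e2 he2 heq
          have h1' := (Finset.mem_filter.mp he1).2
          have h2' := (Finset.mem_filter.mp he2).2
          simp only [dif_pos h1', dif_pos h2'] at heq
          by_contra hne
          have hm1 : e1 ∈ M' := (Finset.mem_sdiff.mp (Finset.mem_filter.mp he1).1).1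
          have hm2 : e2 ∈ M' := (Finset.mem_sdiff.mp (Finset.mem_filter.mp he2).1).1
          exact hM'.2 e1 hm1 e2 hm2 hne h1'.choose h1'.choose_spec.1
            (heq ▸ h2'.choose_spec.1)
      calc (A.filter (fun e => ∃ v, v ∈ e ∧ v ∈ s(a, b))).card
          ≤ ({a, b} : Finset V).card := hsub
        _ ≤ 2 := by
            apply le_trans (Finset.card_insert_le _ _)
            simp
  have hcalc : 2 * A.card ≤ 2 * B.card := by
    calc 2 * A.card = ∑ _e ∈ A, 2 := by rw [Finset.sum_const, smul_eq_mul, mul_comm]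
      _ ≤ ∑ e ∈ A, (B.filter (fun f => ∃ v, v ∈ e ∧ v ∈ f)).card :=
          Finset.sum_le_sum h1
      _ = ∑ e ∈ A, ∑ f ∈ B, (if ∃ v, v ∈ e ∧ v ∈ f then 1 else 0) := by
          simp only [Finset.card_filter]
      _ = ∑ f ∈ B, ∑ e ∈ A, (if ∃ v, v ∈ e ∧ v ∈ f then 1 else 0) := Finset.sum_comm
      _ = ∑ f ∈ B, (A.filter (fun e => ∃ v, v ∈ e ∧ v ∈ f)).card := by
          simp only [Finset.card_filter]
      _ ≤ ∑ _f ∈ B, 2 := Finset.sum_le_sum (fun f _ => h2 f)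
      _ = 2 * B.card := by rw [Finset.sum_const, smul_eq_mul, mul_comm]
  exact Nat.le_of_mul_le_mul_left hcalc (by norm_num)
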